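/- In any sorted (non-increasing) binary sequence, the number of 1s at odd positions equals the number of 1s at even positions, or exceeds it by exactly one. Consequently, if a and b are formed by merging (sorting) the odd-indexed and even-indexed subsequences respectively of four sorted binary sequences, then |b|₁ ≤ |a|₁ ≤ |b|₁ + 4. -/

import Mathlib

/-- Split a list into its odd-indexed elements (1st, 3rd, ...) and its even-indexed
elements (2nd, 4th, ...). -/
def oddsEvens {α : Type*} : List α → List α × List α
  | [] => ([], [])
  | a :: rest =>
    let p := oddsEvens rest
    (a :: p.2, p.1)

theorem oddsEvens_key : ∀ l : List Bool, List.Pairwise (fun a b : Bool => b ≤ a) l →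
      (oddsEvens l).1.count true = (oddsEvens l).2.count true ∨
      (oddsEvens l).1.count true = (oddsEvens l).2.count true + 1
  | [], _ => Or.inl rfl
  | [a], _ => by
    cases a <;> simp [oddsEvens]
  | a :: b :: rest, h => by
    obtain ⟨h1, h2⟩ := List.pairwise_cons.mp h
    obtain ⟨h3, hrest⟩ := List.pairwise_cons.mp h2
    have hab : b ≤ a := h1 b (by simp)
    have ih := oddsEvens_key rest hrest
    cases a <;> cases b
    · simpa [oddsEvens] using ih
    · exact absurd hab (by decide)
    · -- a = true, b = false: all of rest are false
      have hall : ∀ c ∈ rest, c = false := by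
        intro c hc
        have := h3 c hc
        have h4 : c ≤ false := by simpa using this
        cases c
        · rfl
        · exact absurd h4 (by decide)
      have h1 : (oddsEvens rest).1.count true = 0 := by
        rw [List.count_eq_zero]
        intro hmem
        have : true ∈ rest := by
          have hs : (oddsEvens rest).1.Sublist rest ∨ True := Or.inr trivial
          -- membership: every element of (oddsEvens l).1 or .2 is in l
          clear hs
          have aux : ∀ (l : List Bool), (∀ c ∈ (oddsEvens l).1, c ∈ l) ∧
              (∀ c ∈ (oddsEvens l).2, c ∈ l) := by
            intro l
            induction l with
            | nil => simp [oddsEvens]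
            | cons x xs ih =>
              simp only [oddsEvens]
              constructor
              · intro c hc
                rcases List.mem_cons.mp hc with hh | hh
                · simp [hh]
                · exact List.mem_cons_of_mem _ (ih.2 c hh)
              · intro c hc
                exact List.mem_cons_of_mem _ (ih.1 c hc)
          exact (aux rest).1 true hmem
        have := hall true this
        simp at this
      have h2 : (oddsEvens rest).2.count true = 0 := by omega
      right
      simp [oddsEvens, h1, h2]
    · simpa [oddsEvens] using ih

theorem stmt11 :
    (∀ l : List Bool, List.Pairwise (fun a b : Bool => b ≤ a) l →
      (oddsEvens l).1.count true = (oddsEvens l).2.count true ∨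
      (oddsEvens l).1.count true = (oddsEvens l).2.count true + 1) ∧
    (∀ w x y z a b : List Bool,
      List.Pairwise (fun a b : Bool => b ≤ a) w →
      List.Pairwise (fun a b : Bool => b ≤ a) x →
      List.Pairwise (fun a b : Bool => b ≤ a) y →
      List.Pairwise (fun a b : Bool => b ≤ a) z →
      List.Perm a ((oddsEvens w).1 ++ (oddsEvens x).1 ++ (oddsEvens y).1 ++ (oddsEvens z).1) →
      List.Perm b ((oddsEvens w).2 ++ (oddsEvens x).2 ++ (oddsEvens y).2 ++ (oddsEvens z).2) →
      b.count true ≤ a.count true ∧ a.count true ≤ b.count true + 4) := by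
  refine ⟨oddsEvens_key, ?_⟩
  intro w x y z a b hw hx hy hz ha hb
  have hw' := oddsEvens_key w hw
  have hx' := oddsEvens_key x hx
  have hy' := oddsEvens_key y hy
  have hz' := oddsEvens_key z hz
  rw [ha.count_eq, hb.count_eq]
  simp only [List.count_append]
  omega
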